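/- Let u : (0,1) → ℝ, let α ∈ (0,1], B ≥ 0, c ∈ ℝ, and let (z_k)_{k∈ℤ} be a strictly increasing sequence in (0,1) with infimum 0 and supremum 1. Suppose that u(z_k) = c for every k ∈ ℤ, and that for every k ∈ ℤ and all x, y ∈ [z_k, z_{k+1}], |u(y) − u(x)| ≤ B·|y − x|^α. Then for all x, y ∈ (0,1), |u(y) − u(x)| ≤ 2B·|y − x|^α; i.e. u is α-Hölder on (0,1) with constant 2B. -/
import Mathlib

lemma holder_glue_find_interval (z : ℤ → ℝ) (hmono : StrictMono z)
    (hinf : IsGLB (Set.range z) 0) (hsup : IsLUB (Set.range z) 1)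
    {x : ℝ} (hx : x ∈ Set.Ioo (0:ℝ) 1) : ∃ k : ℤ, z k ≤ x ∧ x < z (k + 1) := by
  have hne : ∃ k : ℤ, z k ≤ x := by
    by_contra h
    push_neg at h
    have : x ≤ 0 := hinf.2 (fun y hy => by
      obtain ⟨k, rfl⟩ := hy; exact (h k).le)
    linarith [hx.1]
  have hbdd : ∃ b : ℤ, ∀ k : ℤ, z k ≤ x → k ≤ b := by
    by_contra h
    push_neg at h
    have : (1:ℝ) ≤ x := hsup.2 (fun y hy => by
      obtain ⟨k, rfl⟩ := hy
      obtain ⟨m, hm, hkm⟩ := h k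
      exact le_trans (hmono.monotone hkm.le) hm)
    linarith [hx.2]
  obtain ⟨b, hb⟩ := hbdd
  obtain ⟨k, hk, hkmax⟩ := Int.exists_greatest_of_bdd ⟨b, hb⟩ hne
  refine ⟨k, hk, ?_⟩
  by_contra h
  push_neg at h
  have := hkmax (k + 1) h
  omega

theorem holder_glue_along_partition
    (u : ℝ → ℝ) (α B c : ℝ) (hα : α ∈ Set.Ioc (0:ℝ) 1) (hB : 0 ≤ B)
    (z : ℤ → ℝ) (hmono : StrictMono z)
    (hrange : ∀ k : ℤ, z k ∈ Set.Ioo (0:ℝ) 1)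
    (hinf : IsGLB (Set.range z) 0) (hsup : IsLUB (Set.range z) 1)
    (hc : ∀ k : ℤ, u (z k) = c)
    (hholder : ∀ k : ℤ, ∀ x ∈ Set.Icc (z k) (z (k + 1)), ∀ y ∈ Set.Icc (z k) (z (k + 1)),
      |u y - u x| ≤ B * |y - x| ^ α) :
    ∀ x ∈ Set.Ioo (0:ℝ) 1, ∀ y ∈ Set.Ioo (0:ℝ) 1,
      |u y - u x| ≤ 2 * B * |y - x| ^ α := by
  -- main lemma for x ≤ y
  have key : ∀ x ∈ Set.Ioo (0:ℝ) 1, ∀ y ∈ Set.Ioo (0:ℝ) 1, x ≤ y →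
      |u y - u x| ≤ 2 * B * |y - x| ^ α := by
    intro x hx y hy hxy
    obtain ⟨k, hk1, hk2⟩ := holder_glue_find_interval z hmono hinf hsup hx
    obtain ⟨m, hm1, hm2⟩ := holder_glue_find_interval z hmono hinf hsup hy
    have hkm : k ≤ m := by
      by_contra h
      push_neg at h
      have : m + 1 ≤ k := h
      have : z (m + 1) ≤ z k := hmono.monotone this
      linarith
    have hrpow_nonneg : (0:ℝ) ≤ |y - x| ^ α := Real.rpow_nonneg (abs_nonneg _) α
    rcases eq_or_lt_of_le hkm with rfl | hlt
    · -- same interval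
      have h := hholder k x ⟨hk1, le_of_lt hk2⟩ y ⟨hm1, le_of_lt hm2⟩
      calc |u y - u x| ≤ B * |y - x| ^ α := h
        _ ≤ 2 * B * |y - x| ^ α := by nlinarith
    · -- k < m
      have hk1m : k + 1 ≤ m := hlt
      have hz1 : z (k + 1) ≤ z m := hmono.monotone hk1m
      have hzx : x ≤ z (k + 1) := le_of_lt hk2
      have hzy : z m ≤ y := hm1
      have h1 : |u (z (k + 1)) - u x| ≤ B * |z (k + 1) - x| ^ α :=
        hholder k x ⟨hk1, hzx⟩ (z (k + 1)) ⟨hmono.le_iff_le.mpr (by omega), le_refl _⟩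
      have h2 : |u y - u (z m)| ≤ B * |y - z m| ^ α :=
        hholder m (z m) ⟨le_refl _, hmono.le_iff_le.mpr (by omega)⟩ y ⟨hm1, le_of_lt hm2⟩
      have hcc : u (z (k + 1)) = u (z m) := by rw [hc, hc]
      have htri : |u y - u x| ≤ |u y - u (z m)| + |u (z (k + 1)) - u x| := by
        have : u y - u x = (u y - u (z m)) + (u (z (k + 1)) - u x) := by
          rw [hcc]; ring
        rw [this]
        exact abs_add_le _ _
      have hb1 : |z (k + 1) - x| ^ α ≤ |y - x| ^ α := by
        apply Real.rpow_le_rpow (abs_nonneg _) _ hα.1.le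
        rw [abs_of_nonneg (by linarith), abs_of_nonneg (by linarith)]
        linarith
      have hb2 : |y - z m| ^ α ≤ |y - x| ^ α := by
        apply Real.rpow_le_rpow (abs_nonneg _) _ hα.1.le
        rw [abs_of_nonneg (by linarith), abs_of_nonneg (by linarith)]
        linarith
      calc |u y - u x| ≤ |u y - u (z m)| + |u (z (k + 1)) - u x| := htri
        _ ≤ B * |y - z m| ^ α + B * |z (k + 1) - x| ^ α := add_le_add h2 h1
        _ ≤ B * |y - x| ^ α + B * |y - x| ^ α := by
            gcongr
        _ = 2 * B * |y - x| ^ α := by ring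
  intro x hx y hy
  rcases le_total x y with h | h
  · exact key x hx y hy h
  · have := key y hy x hx h
    rwa [abs_sub_comm (u y), abs_sub_comm y]
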